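/- Existence of 1-comparator gadgets: for every ℓ ≥ 1, a 1-comparator gadget exists. -/

import Mathlib

/-- Finite rooted ordered representation of finite rooted *unordered* labelled trees.
Unorderedness is handled by comparing trees up to permutation of children. -/
inductive STree (Q : Type) : Type
  | node (label : Q) (children : List (STree Q)) : STree Q

namespace STree

variable {Q : Type}

/-- The label of the root. -/
def rootLabel : STree Q → Q
  | node a _ => a

/-- The children of the root. -/
def children : STree Q → List (STree Q)
  | node _ ts => ts

end STree

mutual
  /-- Number of nodes. -/
  def STree.size {Q : Type} : STree Q → ℕ
    | .node _ ts => 1 + STree.sizeL ts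
  /-- Total number of nodes of a list of trees. -/
  def STree.sizeL {Q : Type} : List (STree Q) → ℕ
    | [] => 0
    | t :: ts => STree.size t + STree.sizeL ts
end

mutual
  /-- Height (a single node has height 0). -/
  def STree.height {Q : Type} : STree Q → ℕ
    | .node _ ts => STree.heightL ts
  /-- One plus the maximal height of a list of trees (0 for the empty list). -/
  def STree.heightL {Q : Type} : List (STree Q) → ℕ
    | [] => 0
    | t :: ts => max (STree.height t + 1) (STree.heightL ts)
end

namespace STree

end STree

mutual
  /-- `TreeLe C C'` is the induced-subtree ordering `C ≤_is C'`: `C` is obtained from `C'`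
  by deleting whole subtrees (equivalently, there is a root-preserving, label-preserving
  injection of the nodes of `C` into the nodes of `C'` such that two nodes are adjacent in
  `C` iff their images are adjacent in `C'`). -/
  inductive TreeLe {Q : Type} : STree Q → STree Q → Prop
    | node {a : Q} {ts us : List (STree Q)} :
        ForestLe ts us → TreeLe (.node a ts) (.node a us)

  /-- An (unordered) embedding of a list of trees into another: an injection matching each
  tree on the left with a distinct tree on the right that dominates it w.r.t. `TreeLe`. -/
  inductive ForestLe {Q : Type} : List (STree Q) → List (STree Q) → Prop
    | nil (us : List (STree Q)) : ForestLe [] us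
    | cons {t u : STree Q} {ts us : List (STree Q)} :
        TreeLe t u → ForestLe ts us → ForestLe (t :: ts) (u :: us)
    | skip {u : STree Q} {ts us : List (STree Q)} :
        ForestLe ts us → ForestLe ts (u :: us)
    | permR {ts us us' : List (STree Q)} :
        ForestLe ts us → us.Perm us' → ForestLe ts us'
end

mutual
  /-- Equality of trees as finite rooted *unordered* labelled trees. -/
  inductive TreeEquiv {Q : Type} : STree Q → STree Q → Prop
    | node {a : Q} {ts us : List (STree Q)} :
        ForestEquiv ts us → TreeEquiv (.node a ts) (.node a us)

  /-- Lists of trees matched bijectively (up to permutation) by `TreeEquiv`. -/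
  inductive ForestEquiv {Q : Type} : List (STree Q) → List (STree Q) → Prop
    | nil : ForestEquiv [] []
    | cons {t u : STree Q} {ts us : List (STree Q)} :
        TreeEquiv t u → ForestEquiv ts us → ForestEquiv (t :: ts) (u :: us)
    | permR {ts us us' : List (STree Q)} :
        ForestEquiv ts us → us.Perm us' → ForestEquiv ts us'
end

/-- `HasPath ps t` : there is a path from the root of `t` (inclusive) whose successive
labels are exactly the (nonempty) list `ps`. -/
inductive HasPath {Q : Type} : List Q → STree Q → Prop
  | single (p : Q) (ts : List (STree Q)) : HasPath [p] (.node p ts)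
  | cons (p : Q) {ps : List Q} {ts : List (STree Q)} {t : STree Q} :
      t ∈ ts → HasPath ps t → HasPath (p :: ps) (.node p ts)

/-- `mkChain q qs` is the path-shaped tree with labels `q, qs...`. -/
def mkChain {Q : Type} : Q → List Q → STree Q
  | q, [] => .node q []
  | q, r :: rest => .node q [mkChain r rest]

/-- Attach the (possibly empty) fresh chain labelled `qs` as a new child. -/
def attachChain {Q : Type} : List Q → List (STree Q) → List (STree Q)
  | [], ts => ts
  | r :: rest, ts => mkChain r rest :: ts

/-- Application of an update transition `(p_0,…,p_i) →u (q_0,…,q_j)` (given as the two label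
lists) to a configuration: fire along a root path labelled `p_0,…,p_i`, relabel the common
prefix, and either create fresh nodes labelled `q_{i+1},…,q_j` (if `i ≤ j`) or delete the
subtree rooted at `v_{j+1}` (if `j < i`). -/
inductive UStep {Q : Type} : List Q → List Q → STree Q → STree Q → Prop
  | last (p q : Q) (rest : List Q) (ts : List (STree Q)) :
      UStep [p] (q :: rest) (.node p ts) (.node q (attachChain rest ts))
  | delete (p q : Q) {ps : List Q} (hps : ps ≠ []) {t : STree Q} (l r : List (STree Q)) :
      HasPath ps t →
      UStep (p :: ps) [q] (.node p (l ++ t :: r)) (.node q (l ++ r))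
  | go (p q : Q) {ps qs : List Q} (hps : ps ≠ []) (hqs : qs ≠ []) {t t' : STree Q}
      (l r : List (STree Q)) :
      UStep ps qs t t' →
      UStep (p :: ps) (q :: qs) (.node p (l ++ t :: r)) (.node q (l ++ t' :: r))

/-- Application of a reset transition `(p_0,…,p_i) →r,x (q_0,…,q_i)` to a configuration:
fire along a root path labelled `p_0,…,p_i`, relabel it to `q_0,…,q_i`, and delete every
subtree rooted at a child of the last path node whose label is `x`. -/
inductive RStep {Q : Type} [DecidableEq Q] : List Q → Q → List Q → STree Q → STree Q → Prop
  | last (p q x : Q) (ts : List (STree Q)) :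
      RStep [p] x [q] (.node p ts) (.node q (ts.filter (fun t => t.rootLabel ≠ x)))
  | go (p q x : Q) {ps qs : List Q} (hps : ps ≠ []) {t t' : STree Q} (l r : List (STree Q)) :
      RStep ps x qs t t' →
      RStep (p :: ps) x (q :: qs) (.node p (l ++ t :: r)) (.node q (l ++ t' :: r))

/-- A transition of a `k`-NRCS : either an update transition or a reset transition,
presented by its label lists. -/
inductive NTrans (Q : Type) : Type
  | upd (ps qs : List Q) : NTrans Q
  | rst (ps : List Q) (x : Q) (qs : List Q) : NTrans Q

/-- A `k`-NRCS `(Q, δ_u, δ_r)` : a finite set of update transitions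
`δ_u ⊆ ⋃_{1 ≤ i,j ≤ k+1} Q^i × Q^j` and a finite set of reset transitions
`δ_r ⊆ ⋃_{1 ≤ i ≤ k} Q^i × Q × Q^i` (the state set is the ambient type `Q`). -/
structure NRCS (Q : Type) [DecidableEq Q] (k : ℕ) where
  update : Finset (List Q × List Q)
  reset : Finset (List Q × Q × List Q)
  update_wf : ∀ t ∈ update, 1 ≤ t.1.length ∧ t.1.length ≤ k + 1 ∧
      1 ≤ t.2.length ∧ t.2.length ≤ k + 1
  reset_wf : ∀ t ∈ reset, 1 ≤ t.1.length ∧ t.1.length ≤ k ∧ t.2.2.length = t.1.length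

namespace NRCS

variable {Q : Type} [DecidableEq Q] {k : ℕ}

/-- Membership of a transition in an NRCS. -/
def hasTrans (N : NRCS Q k) : NTrans Q → Prop
  | .upd ps qs => (ps, qs) ∈ N.update
  | .rst ps x qs => (ps, x, qs) ∈ N.reset

/-- `C →_t C'` : a step via the particular transition `t`. -/
def TransStep : NTrans Q → STree Q → STree Q → Prop
  | .upd ps qs, C, C' => UStep ps qs C C'
  | .rst ps x qs, C, C' => RStep ps x qs C C'

/-- The step relation `C → C'` of the NRCS `N`. -/
def Step (N : NRCS Q k) (C C' : STree Q) : Prop :=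
  ∃ t : NTrans Q, N.hasTrans t ∧ TransStep t C C'

/-- Reachability `C →* C'` (reflexive-transitive closure of the step relation). -/
def Reaches (N : NRCS Q k) : STree Q → STree Q → Prop :=
  Relation.ReflTransGen N.Step

/-- The lossy step relation: first delete some whole subtrees, then take a standard step. -/
def LossyStep (N : NRCS Q k) (C D : STree Q) : Prop :=
  ∃ C₀ : STree Q, TreeLe C₀ C ∧ N.Step C₀ D

/-- Lossy reachability. -/
def LossyReaches (N : NRCS Q k) : STree Q → STree Q → Prop :=
  Relation.ReflTransGen N.LossyStep

end NRCS

/-! Ordinals below `ε₀` are represented in Cantor normal form by Mathlib's type `ONote`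
(`ONote.oadd e n a` represents `ω^e·n + a`; `ONote.NF` is the Cantor normal form predicate). -/

/-- Number of `oadd` constructors (used as a termination measure). -/
def ONote.cnt : ONote → ℕ
  | .zero => 0
  | .oadd e _ a => e.cnt + a.cnt + 1

/-- Natural (Hessenberg) sum `⊕` of two ordinal notations: merge the CNFs in
decreasing order of exponents, adding coefficients of equal exponents. -/
def ONote.nadd : ONote → ONote → ONote
  | .zero, y => y
  | .oadd e₁ n₁ a₁, .zero => .oadd e₁ n₁ a₁
  | .oadd e₁ n₁ a₁, .oadd e₂ n₂ a₂ =>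
    match ONote.cmp e₁ e₂ with
    | .lt => .oadd e₂ n₂ (ONote.nadd (.oadd e₁ n₁ a₁) a₂)
    | .eq => .oadd e₁ (n₁ + n₂) (ONote.nadd a₁ a₂)
    | .gt => .oadd e₁ n₁ (ONote.nadd a₁ (.oadd e₂ n₂ a₂))
  termination_by x y => x.cnt + y.cnt
  decreasing_by all_goals (simp [ONote.cnt] <;> omega)

/-- `scaleN e m t` is `ω^e·m + t` (which is just `t` when `m = 0`). -/
def ONote.scaleN (e : ONote) (m : ℕ) (t : ONote) : ONote :=
  match m with
  | 0 => t
  | m + 1 => .oadd e ⟨m + 1, Nat.succ_pos m⟩ t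

/-- Ordinal multiplication by a natural number:
`(ω^e·c + a)·m = ω^e·(c·m) + a` for `m ≥ 1`, and `α·0 = 0`. -/
def ONote.omulNat : ONote → ℕ → ONote
  | _, 0 => .zero
  | .zero, _ => .zero
  | .oadd e c a, m + 1 => .oadd e (c * ⟨m + 1, Nat.succ_pos m⟩) a

/-- Helper for `ONote.Dn`: `DnAux n pre β` computes
`⊕_i ω^{pre ⊕ (β minus its i-th group) ⊕ ω^{γ_i}·(c_i−1) ⊕ γ_i·(n−1) ⊕ D_n(ω^{γ_i})}·(c_i·n)`
where `β = ω^{γ_1}·c_1 + … + ω^{γ_d}·c_d` in strict CNF and `pre` accumulates the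
already processed groups. -/
def ONote.DnAux (n : ℕ) : ONote → ONote → ONote
  | _, .zero => .zero
  | pre, .oadd e c rest =>
    ONote.nadd
      (ONote.scaleN
        (ONote.nadd (ONote.nadd (ONote.nadd pre rest) (ONote.scaleN e ((c : ℕ) - 1) .zero))
          (ONote.nadd (ONote.omulNat e (n - 1)) (ONote.DnAux n .zero e)))
        ((c : ℕ) * n) .zero)
      (ONote.DnAux n (ONote.nadd pre (.oadd e c .zero)) rest)
  termination_by _ β => β.cnt
  decreasing_by all_goals (simp [ONote.cnt] <;> omega)

/-- `Dn n β` is `D_n(ω^β)` : `D_n(ω^0) = 0` and, for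
`β = ω^{η_1} ⊕ … ⊕ ω^{η_m} > 0` in CNF,
`D_n(ω^β) = ⊕_{i=1}^m ω^{(⊕_{p≠i} ω^{η_p}) ⊕ η_i·(n−1) ⊕ D_n(ω^{η_i})}·n`. -/
def ONote.Dn (n : ℕ) (β : ONote) : ONote :=
  ONote.DnAux n .zero β

/-- Helper for `ONote.deltaList`, processing the groups of the strict CNF one by one. -/
def ONote.deltaAux (n : ℕ) : ONote → ONote → List ONote
  | _, .zero => []
  | pre, .oadd e c rest =>
    (ONote.nadd (ONote.nadd pre rest)
        (ONote.nadd (ONote.scaleN e ((c : ℕ) - 1) .zero) (ONote.Dn n e)))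
      :: ONote.deltaAux n (ONote.nadd pre (.oadd e c .zero)) rest

/-- The finite set `δ_n(α)` (as a list) : for `α = ω^{β_1}·c_1 ⊕ … ⊕ ω^{β_d}·c_d > 0` in
strict CNF, `δ_n(α) = { (⊕_{p≠i} ω^{β_p}·c_p) ⊕ ω^{β_i}·(c_i−1) ⊕ D_n(ω^{β_i}) : 1 ≤ i ≤ d }`. -/
def ONote.deltaList (n : ℕ) (α : ONote) : List ONote :=
  ONote.deltaAux n .zero α

/-- `α` is `ℓ`-lean : every coefficient appearing hereditarily in the CNF of `α`
(in `α` and in all exponents) is at most `ℓ`. -/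
def ONote.IsLean (l : ℕ) : ONote → Prop
  | .zero => True
  | .oadd e c a => (c : ℕ) ≤ l ∧ ONote.IsLean l e ∧ ONote.IsLean l a

/-- `Ω_k`, the height-`k` tower of `ω` : `Ω_1 = ω` and `Ω_{k+1} = ω^{Ω_k}`
(with the convention `Ω_0 = 1`). -/
def ONote.OmegaTower : ℕ → ONote
  | 0 => 1
  | k + 1 => .oadd (ONote.OmegaTower k) 1 .zero

/-- `(Ω_k)_ℓ`, the `ℓ`-th element of the fundamental sequence of the tower `Ω_k` :
`(Ω_1)_ℓ = ℓ` and `(Ω_{k+1})_ℓ = ω^{(Ω_k)_ℓ}`. -/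
def ONote.towerFS : ℕ → ℕ → ONote
  | 0, l => ONote.ofNat l
  | 1, l => ONote.ofNat l
  | k + 2, l => .oadd (ONote.towerFS (k + 1) l) 1 .zero

/-- Classification of a CNF ordinal notation together with the fixed assignment of
fundamental sequences: `.inl none` for `0`, `.inl (some β)` for the successor of `β`, and
`.inr f` for a limit with fundamental sequence `f`. The assignment is the standard one:
`(γ + ω^{β+1})_x = γ + ω^β·x` and `(γ + ω^λ)_x = γ + ω^{λ_x}` for limit `λ`. -/
def ONote.fundSeq : ONote → (Option ONote) ⊕ (ℕ → ONote)
  | .zero => .inl none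
  | .oadd e c a =>
    match ONote.fundSeq a with
    | .inl (some a') => .inl (some (.oadd e c a'))
    | .inr f => .inr (fun x => .oadd e c (f x))
    | .inl none =>
      match e, ONote.fundSeq e with
      | .zero, _ => .inl (some (ONote.scaleN .zero ((c : ℕ) - 1) .zero))
      | _, .inl (some e') => .inr (fun x => ONote.scaleN e ((c : ℕ) - 1) (ONote.scaleN e' x .zero))
      | _, .inr f => .inr (fun x => ONote.scaleN e ((c : ℕ) - 1) (.oadd (f x) 1 .zero))
      | _, .inl none => .inl none

/-- The Hardy hierarchy `(H^α)_{α<ε₀}` for the successor function, as a relation: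
`HardyRel α n m` holds iff `H^α(n) = m`. It is the graph of the recursion
`H^0(x) = x`, `H^{α+1}(x) = H^α(x+1)`, `H^λ(x) = H^{λ_x}(x)`. -/
inductive HardyRel : ONote → ℕ → ℕ → Prop
  | zero (n : ℕ) : HardyRel .zero n n
  | succ {α β : ONote} {n m : ℕ} : ONote.fundSeq α = .inl (some β) →
      HardyRel β (n + 1) m → HardyRel α n m
  | limit {α : ONote} {f : ℕ → ONote} {n m : ℕ} : ONote.fundSeq α = .inr f →
      HardyRel (f n) n m → HardyRel α n m

/-- The Cichoń hierarchy `(h_α)_{α<ε₀}` for a function `h : ℕ → ℕ`, as a relation: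
`CichonRel h α x y` holds iff `h_α(x) = y`. It is the graph of the recursion
`h_0(x) = 0`, `h_{α+1}(x) = 1 + h_α(h(x))`, `h_λ(x) = h_{λ_x}(x)`. -/
inductive CichonRel (h : ℕ → ℕ) : ONote → ℕ → ℕ → Prop
  | zero (x : ℕ) : CichonRel h .zero x 0
  | succ {α β : ONote} {x y : ℕ} : ONote.fundSeq α = .inl (some β) →
      CichonRel h β (h x) y → CichonRel h α x (y + 1)
  | limit {α : ONote} {f : ℕ → ONote} {x y : ℕ} : ONote.fundSeq α = .inr f →
      CichonRel h (f x) x y → CichonRel h α x y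

/-- The `m`-predecessor operation `P_m`, as a relation: `PRel m α β` holds iff
`P_m(α) = β`, where `P_m(β+1) = β` and `P_m(λ) = P_m(λ_m)` for limit `λ`. -/
inductive PRel (m : ℕ) : ONote → ONote → Prop
  | succ {α β : ONote} : ONote.fundSeq α = .inl (some β) → PRel m α β
  | limit {α β : ONote} {f : ℕ → ONote} : ONote.fundSeq α = .inr f →
      PRel m (f m) β → PRel m α β

/-- The Hardy rewrite relation `→_H` on pairs of an ordinal below `ε₀` and a natural
number, generated by `(α+1, n) →_H (α, n+1)` and `(λ, n) →_H (λ_n, n)` for limit `λ`. -/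
inductive HStep : ONote × ℕ → ONote × ℕ → Prop
  | succ {α β : ONote} {n : ℕ} : ONote.fundSeq α = .inl (some β) → HStep (α, n) (β, n + 1)
  | limit {α : ONote} {f : ℕ → ONote} {n : ℕ} : ONote.fundSeq α = .inr f →
      HStep (α, n) (f n, n)

/-- `→*_H`, the reflexive-transitive closure of the Hardy rewrite relation. -/
def HardyRT : ONote × ℕ → ONote × ℕ → Prop :=
  Relation.ReflTransGen HStep

/-- The label alphabet used by the nested reset counter systems of the constructions:
it contains the distinguished labels `ω` and `#`, all gadget control labels, the
compressed last-level labels `ω^j` (`pow j`), pairs `(m, ω^j)` of an arbitrary label with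
a last-level label `ω^j`, and countably many further auxiliary labels. -/
inductive GLab : Type
  | omega | hash
  | startCopy | endCopy | mrkd | cpd
  | startSm | endSm | smallest
  | startBig | endBig | biggest
  | startCmp | endCmp | acmp | bcmp | equalCmp | bigCmp | smallCmp
  | pow (j : ℕ)
  | pair (m : GLab) (j : ℕ)
  | aux (i : ℕ)
  deriving DecidableEq

/-- The base of a label: `(m, ω^j) ↦ m` and every other label is its own base.
(Following the convention that a node at the last level "labelled by `x`" means that it
carries the pair `(x, ω^j)` recording its original last-level label `ω^j`.) -/
def GLab.baseOf : GLab → GLab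
  | .pair m _ => m
  | l => l

/-- Relabel to base `x`, preserving the recorded last-level label of a pair. -/
def GLab.relabTo (x : GLab) : GLab → GLab
  | .pair _ j => .pair x j
  | _ => x

/-- The number of terms of the CNF of an ordinal notation (for `β < ω` this is `β`). -/
def ONote.termCount : ONote → ℕ
  | .zero => 0
  | .oadd _ c a => (c : ℕ) + ONote.termCount a

/-- `mkForest d α` : the forest `FO_α` of the trees of the CNF terms of `α`, where `d`
levels are available below the current one; nodes at the last available level are
compressed, together with their children, into single leaves labelled `ω^j` (`pow j`). -/
def mkForest : ℕ → ONote → List (STree GLab)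
  | _, .zero => []
  | 0, .oadd _ _ _ => []
  | 1, .oadd e c a =>
      List.replicate (c : ℕ) (STree.node (.pow e.termCount) []) ++ mkForest 1 a
  | d + 2, .oadd e c a =>
      List.replicate (c : ℕ) (STree.node .omega (mkForest (d + 1) e)) ++ mkForest (d + 2) a

/-- The tree `T_α` (for `α ≤ (Ω_{k+1})_ℓ`): the trees of `FO_α` attached to a new root
labelled `ω`, with all nodes at level `k` compressed into leaves labelled `ω^j`. -/
def Ttree (k : ℕ) (α : ONote) : STree GLab :=
  .node .omega (mkForest k α)

/-- The configuration `C_{α,n}` : the tree `T_α` with `n` additional children of the root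
labelled `#`. -/
def Cfg (k : ℕ) (α : ONote) (n : ℕ) : STree GLab :=
  .node .omega (mkForest k α ++ List.replicate n (STree.node .hash []))

mutual
  /-- The ordinal encoded by (a subtree of) an encoder, where `d` levels are available
  below the current node: a last-level node (`d = 0`) encodes the `j` recorded in its label
  `ω^j` or `(m, ω^j)`, and otherwise the node encodes `⊕_{c child} ω^{ordinal of c}`. -/
  def decodeT : ℕ → STree GLab → ONote
    | 0, .node l _ =>
        (match l with
          | .pow j => ONote.ofNat j
          | .pair _ j => ONote.ofNat j
          | _ => .zero)
    | d + 1, .node _ ts => decodeL d ts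
  /-- The natural sum `⊕_t ω^{ordinal of t}` over a list of trees. -/
  def decodeL : ℕ → List (STree GLab) → ONote
    | _, [] => .zero
    | d, t :: ts => ONote.nadd (.oadd (decodeT d t) 1 .zero) (decodeL d ts)
end

mutual
  /-- Well-formedness of (a subtree of) an encoder with `d` available levels below the
  current node: nodes at the last level are leaves labelled by pairs `(m, ω^j)`, and all
  other nodes carry arbitrary labels. -/
  def WFEncT : ℕ → STree GLab → Prop
    | 0, .node l ts => ts = [] ∧ ∃ (m : GLab) (j : ℕ), l = .pair m j
    | d + 1, .node _ ts => WFEncL d ts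
  /-- All trees of the list are well-formed with `d` available levels. -/
  def WFEncL : ℕ → List (STree GLab) → Prop
    | _, [] => True
    | d, t :: ts => WFEncT d t ∧ WFEncL d ts
end

/-- An encoder for `α` (of height at most `k`): any labelled tree obtained from `T_α` by
replacing the label of each node at levels `0,…,k−1` by an arbitrary label and the label
`ω^j` of each node at level `k` by a pair `(m, ω^j)` for an arbitrary label `m`.
Equivalently: a well-formed tree that encodes `α`. -/
def IsEncoder (k : ℕ) (α : ONote) (T : STree GLab) : Prop :=
  WFEncT k T ∧ decodeT k T = α

/-- A marked encoder for `α` : an encoder for `α` whose root is labelled `start_copy` and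
exactly one child `v` of the root is labelled `mrkd`. -/
def MarkedEncoder (k : ℕ) (α : ONote) (T : STree GLab) : Prop :=
  IsEncoder k α T ∧ T.rootLabel = .startCopy ∧
    T.children.countP (fun t => decide (t.rootLabel.baseOf = GLab.mrkd)) = 1

/-- A lossy copy encoder for a marked encoder `T` (with marked child `v`): obtained from
`T` by deleting some (possibly zero) whole subtrees inside the subtree of `v`, duplicating
this subtree as a new child subtree of the root, deleting some (possibly zero) further
subtrees inside the subtree of `v`, and relabelling the root to `end_copy`, `v` to `ω`,
and the root of the copy to `cpd`. -/
def LossyCopyEnc (T T' : STree GLab) : Prop :=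
  ∃ (l r : List (STree GLab)) (lv : GLab) (cs cs₁ cs₂ : List (STree GLab)),
    T = .node .startCopy (l ++ .node lv cs :: r) ∧ lv.baseOf = .mrkd ∧
    ForestLe cs₁ cs ∧ ForestLe cs₂ cs₁ ∧
    TreeEquiv T'
      (.node .endCopy
        (l ++ .node (GLab.relabTo .omega lv) cs₂ :: r ++ [.node (GLab.relabTo .cpd lv) cs₁]))

/-- A perfect copy encoder for `T` : the lossy copy encoder in which no nodes are deleted. -/
def PerfectCopyEnc (T T' : STree GLab) : Prop :=
  ∃ (l r : List (STree GLab)) (lv : GLab) (cs : List (STree GLab)),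
    T = .node .startCopy (l ++ .node lv cs :: r) ∧ lv.baseOf = .mrkd ∧
    TreeEquiv T'
      (.node .endCopy
        (l ++ .node (GLab.relabTo .omega lv) cs :: r ++ [.node (GLab.relabTo .cpd lv) cs]))

/-- A `k`-copy gadget : a `k`-NRCS such that for every `α ≤ (Ω_{k+1})_ℓ` and every marked
encoder `T` for `α` : (1) there is a run from `T` to a perfect copy encoder of `T`, and
(2) every run from `T` ending in a tree whose root is labelled `end_copy` ends in a lossy
copy encoder of `T`. -/
def IsCopyGadget (k l : ℕ) (N : NRCS GLab k) : Prop :=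
  ∀ α : ONote, α.NF → α ≤ ONote.towerFS (k + 1) l →
    ∀ T : STree GLab, MarkedEncoder k α T →
      (∃ T', N.Reaches T T' ∧ PerfectCopyEnc T T') ∧
      (∀ T', N.Reaches T T' → T'.rootLabel = .endCopy → LossyCopyEnc T T')

/-- The kept versions (in `os`) of the children (in `ts`) of the root which were
originally labelled `ω`. -/
def keptOmega (ts : List (STree GLab)) (os : List (Option (STree GLab))) :
    List (STree GLab) :=
  (ts.zip os).filterMap
    (fun p => if p.1.rootLabel.baseOf = GLab.omega then p.2 else none)

/-- A small-initialized encoder for `α` : an encoder for `α` whose root is labelled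
`start_sm`. -/
def SmallInitEncoder (k : ℕ) (α : ONote) (T : STree GLab) : Prop :=
  IsEncoder k α T ∧ T.rootLabel = .startSm

/-- A lossy smallest-child encoder for a small-initialized encoder `T` (with `v_1,…,v_n`
the children of the root labelled `ω`): a tree `T'` containing all nodes of `T` except
possibly some inside the subtrees of the `v_i` (each of which may vanish entirely), with
all labels as in `T` except that the root is labelled `end_sm` and each surviving `v_i` is
labelled `smallest` iff the ordinal encoded by its subtree in `T'` is the smallest among
the ordinals encoded in `T'` by the subtrees of the surviving `v_j` (and otherwise keeps
its label). -/
def LossySmallestEnc (k : ℕ) (T T' : STree GLab) : Prop :=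
  ∃ (ts : List (STree GLab)) (os : List (Option (STree GLab))),
    T = .node .startSm ts ∧ os.length = ts.length ∧
    TreeEquiv T' (.node .endSm os.reduceOption) ∧
    ∀ (i : ℕ) (hi : i < ts.length) (hj : i < os.length),
      ((ts.get ⟨i, hi⟩).rootLabel.baseOf ≠ .omega →
          os.get ⟨i, hj⟩ = some (ts.get ⟨i, hi⟩)) ∧
      ((ts.get ⟨i, hi⟩).rootLabel.baseOf = .omega →
        os.get ⟨i, hj⟩ = none ∨
        ∃ (b : GLab) (cs' : List (STree GLab)),
          os.get ⟨i, hj⟩ = some (.node b cs') ∧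
          ForestLe cs' (ts.get ⟨i, hi⟩).children ∧
          (b = GLab.relabTo .smallest (ts.get ⟨i, hi⟩).rootLabel ∨
            b = (ts.get ⟨i, hi⟩).rootLabel) ∧
          (b = GLab.relabTo .smallest (ts.get ⟨i, hi⟩).rootLabel ↔
            ∀ u ∈ keptOmega ts os,
              ONote.repr (decodeT (k - 1) (.node b cs')) ≤ ONote.repr (decodeT (k - 1) u)))

/-- A `k`-smallest-child gadget : a `k`-NRCS such that for every `α ≤ (Ω_{k+1})_ℓ` and
every small-initialized encoder `T` for `α` : (1) there is a run from `T` to the perfect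
(deletion-free) smallest-child encoder of `T`, and (2) every run from `T` ending in a tree
whose root is labelled `end_sm` ends in a lossy smallest-child encoder of `T`. -/
def IsSmallestGadget (k l : ℕ) (N : NRCS GLab k) : Prop :=
  ∀ α : ONote, α.NF → α ≤ ONote.towerFS (k + 1) l →
    ∀ T : STree GLab, SmallInitEncoder k α T →
      (∃ T', N.Reaches T T' ∧ LossySmallestEnc k T T' ∧ T'.size = T.size) ∧
      (∀ T', N.Reaches T T' → T'.rootLabel = .endSm → LossySmallestEnc k T T')

/-- A big-initialized encoder for `α` : an encoder for `α` whose root is labelled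
`start_big`. -/
def BigInitEncoder (k : ℕ) (α : ONote) (T : STree GLab) : Prop :=
  IsEncoder k α T ∧ T.rootLabel = .startBig

/-- A lossy biggest-child encoder: as the lossy smallest-child encoder, with `end_big` and
`biggest` in place of `end_sm` and `smallest`, and with "biggest" in place of "smallest". -/
def LossyBiggestEnc (k : ℕ) (T T' : STree GLab) : Prop :=
  ∃ (ts : List (STree GLab)) (os : List (Option (STree GLab))),
    T = .node .startBig ts ∧ os.length = ts.length ∧
    TreeEquiv T' (.node .endBig os.reduceOption) ∧
    ∀ (i : ℕ) (hi : i < ts.length) (hj : i < os.length),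
      ((ts.get ⟨i, hi⟩).rootLabel.baseOf ≠ .omega →
          os.get ⟨i, hj⟩ = some (ts.get ⟨i, hi⟩)) ∧
      ((ts.get ⟨i, hi⟩).rootLabel.baseOf = .omega →
        os.get ⟨i, hj⟩ = none ∨
        ∃ (b : GLab) (cs' : List (STree GLab)),
          os.get ⟨i, hj⟩ = some (.node b cs') ∧
          ForestLe cs' (ts.get ⟨i, hi⟩).children ∧
          (b = GLab.relabTo .biggest (ts.get ⟨i, hi⟩).rootLabel ∨
            b = (ts.get ⟨i, hi⟩).rootLabel) ∧
          (b = GLab.relabTo .biggest (ts.get ⟨i, hi⟩).rootLabel ↔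
            ∀ u ∈ keptOmega ts os,
              ONote.repr (decodeT (k - 1) u) ≤ ONote.repr (decodeT (k - 1) (.node b cs'))))

/-- A `k`-biggest-child gadget : a `k`-NRCS such that for every `α < (Ω_{k+1})_ℓ` and
every big-initialized encoder `T` for `α` : (1) there is a run from `T` to the perfect
(deletion-free) biggest-child encoder of `T`, and (2) every run from `T` ending in a tree
whose root is labelled `end_big` ends in a lossy biggest-child encoder of `T`. -/
def IsBiggestGadget (k l : ℕ) (N : NRCS GLab k) : Prop :=
  ∀ α : ONote, α.NF → α < ONote.towerFS (k + 1) l →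
    ∀ T : STree GLab, BigInitEncoder k α T →
      (∃ T', N.Reaches T T' ∧ LossyBiggestEnc k T T' ∧ T'.size = T.size) ∧
      (∀ T', N.Reaches T T' → T'.rootLabel = .endBig → LossyBiggestEnc k T T')

/-- A comparator encoder for `α` : an encoder for `α` whose root is labelled `start_cmp`
and exactly two children `v_A, v_B` of the root are labelled `A_cmp` and `B_cmp`. -/
def ComparatorEnc (k : ℕ) (α : ONote) (T : STree GLab) : Prop :=
  IsEncoder k α T ∧ T.rootLabel = .startCmp ∧
    T.children.countP (fun t => decide (t.rootLabel.baseOf = GLab.acmp)) = 1 ∧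
    T.children.countP (fun t => decide (t.rootLabel.baseOf = GLab.bcmp)) = 1

/-- A lossy compared encoder for a comparator encoder `T` : a tree `T'` containing all
nodes of `T` except possibly some inside the subtrees of `v_A` and `v_B`, with all labels
as in `T` except that the root is labelled `end_cmp` and `v_A, v_B` are both labelled
`equal_cmp` if the ordinals encoded in `T'` by their subtrees are equal, and otherwise the
one with the larger encoded ordinal is labelled `big_cmp` and the other `small_cmp`. -/
def LossyCmpEnc (k : ℕ) (T T' : STree GLab) : Prop :=
  ∃ (ts rest : List (STree GLab)) (la lb : GLab)
    (csA csB csA' csB' : List (STree GLab)) (a b : GLab),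
    T = .node .startCmp ts ∧
    ts.Perm (.node la csA :: .node lb csB :: rest) ∧
    la.baseOf = .acmp ∧ lb.baseOf = .bcmp ∧
    ForestLe csA' csA ∧ ForestLe csB' csB ∧
    TreeEquiv T' (.node .endCmp (.node a csA' :: .node b csB' :: rest)) ∧
    (ONote.repr (decodeT (k - 1) (.node a csA')) =
        ONote.repr (decodeT (k - 1) (.node b csB')) →
      a = GLab.relabTo .equalCmp la ∧ b = GLab.relabTo .equalCmp lb) ∧
    (ONote.repr (decodeT (k - 1) (.node a csA')) <
        ONote.repr (decodeT (k - 1) (.node b csB')) →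
      a = GLab.relabTo .smallCmp la ∧ b = GLab.relabTo .bigCmp lb) ∧
    (ONote.repr (decodeT (k - 1) (.node b csB')) <
        ONote.repr (decodeT (k - 1) (.node a csA')) →
      a = GLab.relabTo .bigCmp la ∧ b = GLab.relabTo .smallCmp lb)

/-- A `k`-comparator gadget : a `k`-NRCS such that for every `α < (Ω_{k+1})_ℓ` and every
comparator encoder `T` for `α` : (1) there is a run from `T` to the perfect
(deletion-free) compared encoder of `T`, and (2) every run from `T` ending in a tree whose
root is labelled `end_cmp` ends in a lossy compared encoder of `T`. -/
def IsCmpGadget (k l : ℕ) (N : NRCS GLab k) : Prop :=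
  ∀ α : ONote, α.NF → α < ONote.towerFS (k + 1) l →
    ∀ T : STree GLab, ComparatorEnc k α T →
      (∃ T', N.Reaches T T' ∧ LossyCmpEnc k T T' ∧ T'.size = T.size) ∧
      (∀ T', N.Reaches T T' → T'.rootLabel = .endCmp → LossyCmpEnc k T T')

/-! ### Auxiliary development for the 1-comparator gadget -/

namespace CmpGadget

open GLab

mutual
  theorem treeEquiv_refl {Q : Type} : ∀ t : STree Q, TreeEquiv t t
    | .node _ ts => .node (forestEquiv_refl ts)
  theorem forestEquiv_refl {Q : Type} : ∀ ts : List (STree Q), ForestEquiv ts ts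
    | [] => .nil
    | t :: ts => .cons (treeEquiv_refl t) (forestEquiv_refl ts)
end

theorem forestEquiv_of_perm {Q : Type} {ts us : List (STree Q)} (h : ts.Perm us) :
    ForestEquiv ts us := (forestEquiv_refl ts).permR h

theorem sizeL_append {Q : Type} :
    ∀ (xs ys : List (STree Q)), STree.sizeL (xs ++ ys) = STree.sizeL xs + STree.sizeL ys
  | [], ys => by simp [STree.sizeL]
  | x :: xs, ys => by simp [STree.sizeL, sizeL_append xs ys]; omega

theorem nadd_repr_bounds : ∀ (x y : ONote),
    x.repr ≤ (ONote.nadd x y).repr ∧ y.repr ≤ (ONote.nadd x y).repr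
  | .zero, y => by rw [ONote.nadd]; simp
  | .oadd e₁ n₁ a₁, .zero => by rw [ONote.nadd]; simp
  | .oadd e₁ n₁ a₁, .oadd e₂ n₂ a₂ => by
    have hlt := nadd_repr_bounds (ONote.oadd e₁ n₁ a₁) a₂
    have heq := nadd_repr_bounds a₁ a₂
    have hgt := nadd_repr_bounds a₁ (ONote.oadd e₂ n₂ a₂)
    rw [ONote.nadd]
    split
    · constructor
      · exact le_trans hlt.1 le_add_self
      · exact add_le_add_right hlt.2 _
    · rename_i hc
      obtain rfl : e₁ = e₂ := ONote.eq_of_cmp_eq hc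
      have hco : (((n₁ + n₂ : ℕ+) : ℕ) : Ordinal) =
          ((n₁ : ℕ) : Ordinal) + ((n₂ : ℕ) : Ordinal) := by push_cast; ring_nf
      constructor
      · show Ordinal.omega0 ^ e₁.repr * ((n₁ : ℕ) : Ordinal) + a₁.repr ≤
          Ordinal.omega0 ^ e₁.repr * (((n₁ + n₂ : ℕ+) : ℕ) : Ordinal) + (a₁.nadd a₂).repr
        rw [hco, mul_add, add_assoc]
        exact add_le_add_right (le_trans heq.1 le_add_self) _
      · show Ordinal.omega0 ^ e₁.repr * ((n₂ : ℕ) : Ordinal) + a₂.repr ≤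
          Ordinal.omega0 ^ e₁.repr * (((n₁ + n₂ : ℕ+) : ℕ) : Ordinal) + (a₁.nadd a₂).repr
        rw [hco, mul_add, add_assoc]
        exact le_trans (add_le_add_right heq.2 _) le_add_self
    · constructor
      · exact add_le_add_right hgt.1 _
      · exact le_trans hgt.2 le_add_self
  termination_by x y => x.cnt + y.cnt
  decreasing_by all_goals (simp [ONote.cnt] <;> omega)

theorem mem_decodeL_le (d : ℕ) : ∀ {t : STree GLab} {ts : List (STree GLab)}, t ∈ ts →
    ONote.repr (ONote.oadd (decodeT d t) 1 .zero) ≤ ONote.repr (decodeL d ts)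
  | t, u :: ts, h => by
    rcases List.mem_cons.1 h with rfl | h'
    · exact le_trans le_rfl ((nadd_repr_bounds _ _).1.trans_eq (by rw [decodeL]))
    · exact le_trans (mem_decodeL_le d h') ((nadd_repr_bounds _ _).2.trans_eq (by rw [decodeL]))

theorem child_j_lt {l j : ℕ} {m : GLab} {ts : List (STree GLab)}
    (hα : ONote.repr (decodeL 0 ts) < ONote.repr (ONote.towerFS 2 l))
    (hm : STree.node (GLab.pair m j) [] ∈ ts) : j < l := by
  have h1 := mem_decodeL_le 0 hm
  have h2 : ONote.repr (ONote.oadd (decodeT 0 (STree.node (GLab.pair m j) [])) 1 .zero)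
      = Ordinal.omega0 ^ (j : Ordinal) := by
    simp [decodeT, ONote.repr_ofNat]
  have h3 : ONote.repr (ONote.towerFS 2 l) = Ordinal.omega0 ^ (l : Ordinal) := by
    show ONote.repr (ONote.oadd (ONote.towerFS 1 l) 1 .zero) = _
    simp [ONote.towerFS, ONote.repr_ofNat]
  rw [h2] at h1; rw [h3] at hα
  exact_mod_cast (Ordinal.opow_lt_opow_iff_right Ordinal.one_lt_omega0).1
    (lt_of_le_of_lt h1 hα)


/-! ### outcome labels -/

def alab (jA jB : ℕ) : GLab :=
  if jA = jB then .equalCmp else if jA < jB then .smallCmp else .bigCmp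

def blab (jA jB : ℕ) : GLab :=
  if jA = jB then .equalCmp else if jA < jB then .bigCmp else .smallCmp

def outN (jA jB : ℕ) : ℕ := if jA = jB then 0 else if jA < jB then 1 else 2

def alabO : ℕ → GLab
  | 0 => .equalCmp
  | 1 => .smallCmp
  | _ => .bigCmp

theorem alabO_outN (jA jB : ℕ) : alabO (outN jA jB) = alab jA jB := by
  unfold outN alab; split_ifs <;> rfl

theorem blab_ne (jA jB : ℕ) : blab jA jB ≠ GLab.acmp := by
  unfold blab; split_ifs <;> simp

theorem outN_lt (jA jB : ℕ) : outN jA jB < 3 := by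
  unfold outN; split_ifs <;> omega

/-! ### the four distinguished leaves -/

abbrev Anode (j : ℕ) : STree GLab := .node (.pair .acmp j) []
abbrev Bnode (j : ℕ) : STree GLab := .node (.pair .bcmp j) []
abbrev Anode' (jA jB : ℕ) : STree GLab := .node (.pair (alab jA jB) jA) []
abbrev Bnode' (jA jB : ℕ) : STree GLab := .node (.pair (blab jA jB) jB) []

/-! ### the transitions -/

def t1 (jA : ℕ) : List GLab × List GLab :=
  ([.startCmp, .pair .acmp jA], [.aux jA, .pair .acmp jA])

def t2 (l jA jB : ℕ) : List GLab × List GLab :=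
  ([.aux jA, .pair .bcmp jB], [.aux (l + outN jA jB), .pair (blab jA jB) jB])

def t3 (l o jA : ℕ) : List GLab × List GLab :=
  ([.aux (l + o), .pair .acmp jA], [.endCmp, .pair (alabO o) jA])

def updList (l : ℕ) : List (List GLab × List GLab) :=
  ((List.range l).map t1) ++
    ((List.range l).flatMap fun jA => (List.range l).map (t2 l jA)) ++
    ((List.range 3).flatMap fun o => (List.range l).map (t3 l o))

theorem mem_updList {l : ℕ} {t : List GLab × List GLab} :
    t ∈ updList l ↔ (∃ jA, jA < l ∧ t = t1 jA) ∨
      (∃ jA jB, jA < l ∧ jB < l ∧ t = t2 l jA jB) ∨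
      (∃ o jA, o < 3 ∧ jA < l ∧ t = t3 l o jA) := by
  simp only [updList, List.mem_append, List.mem_map, List.mem_flatMap, List.mem_range]
  constructor
  · rintro ((⟨a, ha, rfl⟩ | ⟨a, ha, b, hb, rfl⟩) | ⟨o, ho, a, ha, rfl⟩)
    · exact Or.inl ⟨a, ha, rfl⟩
    · exact Or.inr (Or.inl ⟨a, b, ha, hb, rfl⟩)
    · exact Or.inr (Or.inr ⟨o, a, ho, ha, rfl⟩)
  · rintro (⟨a, ha, rfl⟩ | ⟨a, b, ha, hb, rfl⟩ | ⟨o, a, ho, ha, rfl⟩)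
    · exact Or.inl (Or.inl ⟨a, ha, rfl⟩)
    · exact Or.inl (Or.inr ⟨a, ha, b, hb, rfl⟩)
    · exact Or.inr ⟨o, ho, a, ha, rfl⟩

/-! ### the NRCS -/

def N (l : ℕ) : NRCS GLab 1 where
  update := (updList l).toFinset
  reset := ∅
  update_wf := by
    intro t ht
    rw [List.mem_toFinset] at ht
    rcases mem_updList.1 ht with ⟨a, _, rfl⟩ | ⟨a, b, _, _, rfl⟩ | ⟨o, a, _, _, rfl⟩ <;>
      simp [t1, t2, t3]
  reset_wf := by simp

theorem step_elim {l : ℕ} {C C' : STree GLab} (h : (N l).Step C C') :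
    ∃ ps qs, ((ps, qs) ∈ updList l) ∧ UStep ps qs C C' := by
  obtain ⟨t, ht, hs⟩ := h
  cases t with
  | upd ps qs => exact ⟨ps, qs, List.mem_toFinset.1 ht, hs⟩
  | rst ps x qs => exact absurd ht (by simp [NRCS.hasTrans, N])

theorem step_intro {l : ℕ} {C C' : STree GLab} {ps qs : List GLab}
    (hmem : (ps, qs) ∈ updList l) (h : UStep ps qs C C') : (N l).Step C C' :=
  ⟨.upd ps qs, List.mem_toFinset.2 hmem, h⟩

/-! ### inversion of 2-2 update steps -/

theorem ustep2 {Q : Type} {p0 p1 q0 q1 : Q} {C C' : STree Q}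
    (h : UStep [p0, p1] [q0, q1] C C') :
    ∃ lcs cs rcs, C = .node p0 (lcs ++ .node p1 cs :: rcs) ∧
      C' = .node q0 (lcs ++ .node q1 cs :: rcs) := by
  cases h with
  | go p q hps hqs lcs rcs hinner =>
    cases hinner with
    | last p q rest ts => exact ⟨lcs, ts, rcs, rfl, rfl⟩
    | delete p q hps lcs' rcs' hpath => exact absurd rfl hps
    | go p q hps hqs lcs' rcs' h => exact absurd rfl hps

/-! ### counting -/

theorem eq_of_countP_one {p : STree GLab → Bool} {lcs rcs : List (STree GLab)}
    {A c : STree GLab} (hc : p c = true) (hA : A ∈ lcs ++ c :: rcs) (hpA : p A = true)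
    (h1 : (lcs ++ c :: rcs).countP p = 1) : A = c := by
  rw [List.countP_append, List.countP_cons, hc] at h1
  simp only [if_pos] at h1
  have hl : lcs.countP p = 0 := by omega
  have hr : rcs.countP p = 0 := by omega
  rcases List.mem_append.1 hA with h | h
  · exact absurd hpA (by simpa using List.countP_eq_zero.1 hl A h)
  · rcases List.mem_cons.1 h with rfl | h
    · rfl
    · exact absurd hpA (by simpa using List.countP_eq_zero.1 hr A h)

/-! ### the invariant -/

def Inv (l : ℕ) (ts : List (STree GLab)) (jA jB : ℕ) (C : STree GLab) : Prop :=
  C = .node .startCmp ts ∨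
  C = .node (.aux jA) ts ∨
  (∃ lB rB, ts = lB ++ Bnode jB :: rB ∧
    C = .node (.aux (l + outN jA jB)) (lB ++ Bnode' jA jB :: rB)) ∨
  (∃ lB rB l2 r2, ts = lB ++ Bnode jB :: rB ∧
    lB ++ Bnode' jA jB :: rB = l2 ++ Anode jA :: r2 ∧
    C = .node .endCmp (l2 ++ Anode' jA jB :: r2))

theorem inv_step {l : ℕ} {ts : List (STree GLab)} {jA jB : ℕ}
    (hA : Anode jA ∈ ts) (hB : Bnode jB ∈ ts)
    (hcA : ts.countP (fun t => decide (t.rootLabel.baseOf = GLab.acmp)) = 1)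
    (hcB : ts.countP (fun t => decide (t.rootLabel.baseOf = GLab.bcmp)) = 1)
    (hjA : jA < l) (hjB : jB < l)
    {C C' : STree GLab} (hC : Inv l ts jA jB C) (h : (N l).Step C C') :
    Inv l ts jA jB C' := by
  obtain ⟨ps, qs, hmem, hu⟩ := step_elim h
  rcases mem_updList.1 hmem with ⟨a, ha, heq⟩ | ⟨a, b, ha, hb, heq⟩ | ⟨o, a, ho, ha, heq⟩
  · -- transition t1 a
    rw [t1, Prod.ext_iff] at heq
    obtain ⟨rfl, rfl⟩ := heq
    obtain ⟨lcs, cs, rcs, hCeq, hC'eq⟩ := ustep2 hu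
    rcases hC with rfl | rfl | ⟨lB, rB, hts, rfl⟩ | ⟨lB, rB, l2, r2, hts, hts2, rfl⟩
    · obtain ⟨-, hch⟩ : GLab.startCmp = GLab.startCmp ∧
        ts = lcs ++ STree.node (GLab.pair .acmp a) cs :: rcs := by
        simpa using hCeq
      have hAeq : Anode jA = STree.node (GLab.pair .acmp a) cs := by
        refine eq_of_countP_one (by simp [STree.rootLabel, GLab.baseOf]) ?_
          (by simp [STree.rootLabel, GLab.baseOf]) (hch ▸ hcA)
        rw [← hch]; exact hA
      obtain ⟨h1, h2⟩ : GLab.pair .acmp jA = GLab.pair .acmp a ∧ ([] : List (STree GLab)) = cs := by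
        simpa using hAeq
      obtain rfl : jA = a := by simpa using h1
      refine Or.inr (Or.inl ?_)
      rw [hC'eq, ← h2, hch, ← h2]
    · simp at hCeq
    · simp at hCeq
    · simp at hCeq
  · -- transition t2 a b
    rw [t2, Prod.ext_iff] at heq
    obtain ⟨rfl, rfl⟩ := heq
    obtain ⟨lcs, cs, rcs, hCeq, hC'eq⟩ := ustep2 hu
    rcases hC with rfl | rfl | ⟨lB, rB, hts, rfl⟩ | ⟨lB, rB, l2, r2, hts, hts2, rfl⟩
    · simp at hCeq
    · obtain ⟨h0, hch⟩ : GLab.aux jA = GLab.aux a ∧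
        ts = lcs ++ STree.node (GLab.pair .bcmp b) cs :: rcs := by simpa using hCeq
      obtain rfl : jA = a := by simpa using h0
      have hBeq : Bnode jB = STree.node (GLab.pair .bcmp b) cs := by
        refine eq_of_countP_one (by simp [STree.rootLabel, GLab.baseOf]) ?_
          (by simp [STree.rootLabel, GLab.baseOf]) (hch ▸ hcB)
        rw [← hch]; exact hB
      obtain ⟨h1, h2⟩ : GLab.pair .bcmp jB = GLab.pair .bcmp b ∧ ([] : List (STree GLab)) = cs := by
        simpa using hBeq
      obtain rfl : jB = b := by simpa using h1
      refine Or.inr (Or.inr (Or.inl ⟨lcs, rcs, ?_, ?_⟩))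
      · rw [hch, ← h2]
      · rw [hC'eq, ← h2]
    · obtain ⟨h0, -⟩ : GLab.aux (l + outN jA jB) = GLab.aux a ∧
        lB ++ Bnode' jA jB :: rB = lcs ++ STree.node (GLab.pair .bcmp b) cs :: rcs := by
        simpa using hCeq
      have : l + outN jA jB = a := by simpa using h0
      omega
    · simp at hCeq
  · -- transition t3 o a
    rw [t3, Prod.ext_iff] at heq
    obtain ⟨rfl, rfl⟩ := heq
    obtain ⟨lcs, cs, rcs, hCeq, hC'eq⟩ := ustep2 hu
    rcases hC with rfl | rfl | ⟨lB, rB, hts, rfl⟩ | ⟨lB, rB, l2, r2, hts, hts2, rfl⟩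
    · simp at hCeq
    · obtain ⟨h0, -⟩ : GLab.aux jA = GLab.aux (l + o) ∧
        ts = lcs ++ STree.node (GLab.pair .acmp a) cs :: rcs := by simpa using hCeq
      have : jA = l + o := by simpa using h0
      omega
    · obtain ⟨h0, hch⟩ : GLab.aux (l + outN jA jB) = GLab.aux (l + o) ∧
        lB ++ Bnode' jA jB :: rB = lcs ++ STree.node (GLab.pair .acmp a) cs :: rcs := by
        simpa using hCeq
      obtain rfl : o = outN jA jB := by
        have : l + outN jA jB = l + o := by simpa using h0
        omega
      -- count of acmp-labelled children in the modified list is still 1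
      have hcA2 : (lB ++ Bnode' jA jB :: rB).countP
          (fun t => decide (t.rootLabel.baseOf = GLab.acmp)) = 1 := by
        rw [hts] at hcA
        rw [List.countP_append, List.countP_cons] at hcA ⊢
        simpa [STree.rootLabel, GLab.baseOf, blab_ne jA jB] using hcA
      have hA2 : Anode jA ∈ lB ++ Bnode' jA jB :: rB := by
        have := hts ▸ hA
        rcases List.mem_append.1 this with h | h
        · exact List.mem_append.2 (Or.inl h)
        · rcases List.mem_cons.1 h with h | h
          · exact absurd h (by simp)
          · exact List.mem_append.2 (Or.inr (List.mem_cons.2 (Or.inr h)))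
      have hAeq : Anode jA = STree.node (GLab.pair .acmp a) cs := by
        refine eq_of_countP_one (by simp [STree.rootLabel, GLab.baseOf]) ?_
          (by simp [STree.rootLabel, GLab.baseOf]) (hch ▸ hcA2)
        rw [← hch]; exact hA2
      obtain ⟨h1, h2⟩ : GLab.pair .acmp jA = GLab.pair .acmp a ∧ ([] : List (STree GLab)) = cs := by
        simpa using hAeq
      obtain rfl : jA = a := by simpa using h1
      refine Or.inr (Or.inr (Or.inr ⟨lB, rB, lcs, rcs, hts, ?_, ?_⟩))
      · rw [hch, ← h2]
      · rw [hC'eq, ← h2, alabO_outN]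
    · simp at hCeq

theorem inv_reaches {l : ℕ} {ts : List (STree GLab)} {jA jB : ℕ}
    (hA : Anode jA ∈ ts) (hB : Bnode jB ∈ ts)
    (hcA : ts.countP (fun t => decide (t.rootLabel.baseOf = GLab.acmp)) = 1)
    (hcB : ts.countP (fun t => decide (t.rootLabel.baseOf = GLab.bcmp)) = 1)
    (hjA : jA < l) (hjB : jB < l)
    {C : STree GLab} (h : (N l).Reaches (.node .startCmp ts) C) : Inv l ts jA jB C := by
  induction h with
  | refl => exact Or.inl rfl
  | tail _ hstep ih => exact inv_step hA hB hcA hcB hjA hjB ih hstep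

/-! ### the lossy compared encoder produced at the end -/

theorem decode_pair (m : GLab) (j : ℕ) :
    decodeT 0 (.node (.pair m j) []) = ONote.ofNat j := by
  simp [decodeT]

theorem lossy_of_end {ts lB rB l2 r2 : List (STree GLab)} {jA jB : ℕ}
    (hts : ts = lB ++ Bnode jB :: rB)
    (hts2 : lB ++ Bnode' jA jB :: rB = l2 ++ Anode jA :: r2) :
    LossyCmpEnc 1 (.node .startCmp ts) (.node .endCmp (l2 ++ Anode' jA jB :: r2)) := by
  have hAmem : Anode jA ∈ lB ++ rB := by
    have h0 : Anode jA ∈ lB ++ Bnode' jA jB :: rB := by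
      rw [hts2]; exact List.mem_append.2 (Or.inr List.mem_cons_self)
    rcases List.mem_append.1 h0 with h | h
    · exact List.mem_append.2 (Or.inl h)
    · rcases List.mem_cons.1 h with h | h
      · exfalso
        have h' := congrArg STree.rootLabel h
        simp only [STree.rootLabel] at h'
        exact blab_ne jA jB (by injection h' with h1 h2; exact h1.symm)
      · exact List.mem_append.2 (Or.inr h)
  obtain ⟨x, y, hxy⟩ := List.append_of_mem hAmem
  refine ⟨ts, x ++ y, .pair .acmp jA, .pair .bcmp jB, [], [], [], [],
    .pair (alab jA jB) jA, .pair (blab jA jB) jB, rfl, ?_, rfl, rfl,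
    .nil [], .nil [], ?_, ?_, ?_, ?_⟩
  · -- ts.Perm (Anode jA :: Bnode jB :: (x ++ y))
    rw [hts]
    refine List.perm_middle.trans (.trans (.cons _ ?_) (List.Perm.swap _ _ _))
    rw [hxy]; exact List.perm_middle
  · -- TreeEquiv
    refine TreeEquiv.node (forestEquiv_of_perm ?_)
    have e1 : (lB ++ Bnode' jA jB :: rB).Perm (Anode jA :: (l2 ++ r2)) := by
      rw [hts2]; exact List.perm_middle
    have e2 : (lB ++ Bnode' jA jB :: rB).Perm (Anode jA :: Bnode' jA jB :: (x ++ y)) := by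
      refine List.perm_middle.trans (.trans (.cons _ ?_) (List.Perm.swap _ _ _))
      rw [hxy]; exact List.perm_middle
    have e3 : (l2 ++ r2).Perm (Bnode' jA jB :: (x ++ y)) :=
      (e1.symm.trans e2).cons_inv
    exact List.perm_middle.trans (e3.cons _)
  · -- equal case
    intro h
    have : jA = jB := by
      have := h
      rw [show (1 : ℕ) - 1 = 0 from rfl, decode_pair, decode_pair,
        ONote.repr_ofNat, ONote.repr_ofNat] at this
      exact_mod_cast this
    subst this
    simp [alab, blab, GLab.relabTo]
  · -- A smaller
    intro h
    have hlt : jA < jB := by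
      have := h
      rw [show (1 : ℕ) - 1 = 0 from rfl, decode_pair, decode_pair,
        ONote.repr_ofNat, ONote.repr_ofNat] at this
      exact_mod_cast this
    have hne : jA ≠ jB := Nat.ne_of_lt hlt
    simp [alab, blab, GLab.relabTo, hne, hlt]
  · -- B smaller
    intro h
    have hlt : jB < jA := by
      have := h
      rw [show (1 : ℕ) - 1 = 0 from rfl, decode_pair, decode_pair,
        ONote.repr_ofNat, ONote.repr_ofNat] at this
      exact_mod_cast this
    have hne : jA ≠ jB := Nat.ne_of_gt hlt
    have hnlt : ¬ jA < jB := by omega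
    simp [alab, blab, GLab.relabTo, hne, hlt, hnlt]

/-! ### the concrete run (condition (1)) -/

theorem run_exists {l : ℕ} {ts : List (STree GLab)} {jA jB : ℕ}
    (hA : Anode jA ∈ ts) (hB : Bnode jB ∈ ts)
    (hjA : jA < l) (hjB : jB < l) :
    ∃ T', (N l).Reaches (.node .startCmp ts) T' ∧
      LossyCmpEnc 1 (.node .startCmp ts) T' ∧
      T'.size = (STree.node .startCmp ts : STree GLab).size := by
  obtain ⟨lA, rA, hts1⟩ := List.append_of_mem hA
  obtain ⟨lB, rB, hts2⟩ := List.append_of_mem hB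
  have hA2 : Anode jA ∈ lB ++ Bnode' jA jB :: rB := by
    have : Anode jA ∈ lB ++ Bnode jB :: rB := hts2 ▸ hA
    rcases List.mem_append.1 this with h | h
    · exact List.mem_append.2 (Or.inl h)
    · rcases List.mem_cons.1 h with h | h
      · exact absurd h (by simp)
      · exact List.mem_append.2 (Or.inr (List.mem_cons.2 (Or.inr h)))
  obtain ⟨l2, r2, hts3⟩ := List.append_of_mem hA2
  have step1 : (N l).Step (.node .startCmp ts) (.node (.aux jA) ts) := by
    refine step_intro (mem_updList.2 (Or.inl ⟨jA, hjA, rfl⟩)) ?_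
    rw [hts1]
    exact UStep.go _ _ (by simp) (by simp) lA rA (UStep.last _ _ [] [])
  have step2 : (N l).Step (.node (.aux jA) ts)
      (.node (.aux (l + outN jA jB)) (lB ++ Bnode' jA jB :: rB)) := by
    refine step_intro (mem_updList.2 (Or.inr (Or.inl ⟨jA, jB, hjA, hjB, rfl⟩))) ?_
    rw [hts2]
    exact UStep.go _ _ (by simp) (by simp) lB rB (UStep.last _ _ [] [])
  have step3 : (N l).Step (.node (.aux (l + outN jA jB)) (lB ++ Bnode' jA jB :: rB))
      (.node .endCmp (l2 ++ Anode' jA jB :: r2)) := by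
    refine step_intro
      (mem_updList.2 (Or.inr (Or.inr ⟨outN jA jB, jA, outN_lt jA jB, hjA, rfl⟩))) ?_
    rw [hts3, alabO_outN]
    exact UStep.go _ _ (by simp) (by simp) l2 r2 (UStep.last _ _ [] [])
  refine ⟨.node .endCmp (l2 ++ Anode' jA jB :: r2),
    Relation.ReflTransGen.head step1 (Relation.ReflTransGen.head step2
      (Relation.ReflTransGen.head step3 Relation.ReflTransGen.refl)),
    lossy_of_end hts2 hts3, ?_⟩
  have hs1 : STree.sizeL (lB ++ Bnode' jA jB :: rB) = STree.sizeL (l2 ++ Anode jA :: r2) := by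
    rw [hts3]
  rw [sizeL_append, sizeL_append] at hs1
  simp only [STree.sizeL, STree.size] at hs1
  show 1 + STree.sizeL (l2 ++ Anode' jA jB :: r2) = 1 + STree.sizeL ts
  rw [hts2, sizeL_append, sizeL_append]
  simp only [STree.sizeL, STree.size]
  omega

/-! ### extraction from a comparator encoder -/

theorem wf_mem : ∀ {ts : List (STree GLab)} {t : STree GLab}, WFEncL 0 ts → t ∈ ts →
    ∃ m j, t = .node (.pair m j) []
  | u :: ts, t, hwf, ht => by
    have h1 : WFEncT 0 u ∧ WFEncL 0 ts := by
      rw [WFEncL] at hwf; exact hwf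
    rcases List.mem_cons.1 ht with rfl | h
    · obtain ⟨lu, tsu⟩ := t
      obtain ⟨h2, m, j, h3⟩ : tsu = [] ∧ ∃ m j, lu = .pair m j := by
        rw [WFEncT] at h1; exact h1.1
      exact ⟨m, j, by rw [h2, h3]⟩
    · exact wf_mem h1.2 h

end CmpGadget

/-- Existence of 1-comparator gadgets: for every `ℓ ≥ 1`, a
`1`-comparator gadget exists. -/
theorem one_comparator_gadget_exists (l : ℕ) (hl : 1 ≤ l) :
    ∃ N : NRCS GLab 1, IsCmpGadget 1 l N := by
  refine ⟨CmpGadget.N l, ?_⟩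
  intro α hNF hαlt T hT
  obtain ⟨⟨hwfT, hdec⟩, hroot, hcA, hcB⟩ := hT
  obtain ⟨lab, ts⟩ := T
  obtain rfl : lab = .startCmp := by simpa [STree.rootLabel] using hroot
  have hwf : WFEncL 0 ts := by rw [WFEncT] at hwfT; exact hwfT
  have hdec' : decodeL 0 ts = α := by rw [decodeT] at hdec; exact hdec
  simp only [STree.children] at hcA hcB
  have hposA : 0 < ts.countP (fun t => decide (t.rootLabel.baseOf = GLab.acmp)) := by omega
  have hposB : 0 < ts.countP (fun t => decide (t.rootLabel.baseOf = GLab.bcmp)) := by omega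
  obtain ⟨A0, hAmem, hpA⟩ := List.countP_pos_iff.1 hposA
  obtain ⟨B0, hBmem, hpB⟩ := List.countP_pos_iff.1 hposB
  obtain ⟨mA, jA, rfl⟩ := CmpGadget.wf_mem hwf hAmem
  obtain ⟨mB, jB, rfl⟩ := CmpGadget.wf_mem hwf hBmem
  obtain rfl : mA = .acmp := by
    have h := hpA; simp [STree.rootLabel, GLab.baseOf] at h; exact of_decide_eq_true h
  obtain rfl : mB = .bcmp := by
    have h := hpB; simp [STree.rootLabel, GLab.baseOf] at h; exact of_decide_eq_true h
  have hrepr : ONote.repr (decodeL 0 ts) < ONote.repr (ONote.towerFS 2 l) := by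
    rw [hdec']; exact ONote.lt_def.1 hαlt
  have hjA : jA < l := CmpGadget.child_j_lt hrepr hAmem
  have hjB : jB < l := CmpGadget.child_j_lt hrepr hBmem
  constructor
  · exact CmpGadget.run_exists hAmem hBmem hjA hjB
  · intro T' hr hroot'
    have hinv := CmpGadget.inv_reaches hAmem hBmem hcA hcB hjA hjB hr
    rcases hinv with rfl | rfl | ⟨lB, rB, hts, rfl⟩ | ⟨lB, rB, l2, r2, hts, hts2, rfl⟩
    · simp [STree.rootLabel] at hroot'
    · simp [STree.rootLabel] at hroot'
    · simp [STree.rootLabel] at hroot'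
    · exact CmpGadget.lossy_of_end hts hts2
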